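/- Let F be the free group on two generators a, b, and let w ∈ F be a reduced word of length 6 such that w contains no subword of the form α² and no subword of the form αβα, where α, β range over nontrivial elements of F of length at most 2 (subword meaning: w = u·γ·v as reduced words with lengths adding up). Then no such w exists; i.e., every reduced word of length 6 in F contains a subword α² or αβα with 1 ≤ |α|, |β| ≤ 2. -/

import Mathlib

namespace Stmt19Aux

open FreeGroup List

abbrev X := (Fin 2) × Bool

/-- adjacency relation: consecutive letters do not cancel -/
def R (x y : X) : Prop := ¬(x.1 = y.1 ∧ x.2 = !y.2)

instance : DecidableRel R := fun a b => inferInstanceAs (Decidable ¬_)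

lemma reduce_of_chain : ∀ {L : List X}, List.Chain' R L → FreeGroup.reduce L = L := by
  intro L
  induction L with
  | nil => intro _; rfl
  | cons x L ih =>
    intro h
    have hL : FreeGroup.reduce L = L := ih h.tail
    rw [FreeGroup.reduce.cons, hL]
    cases L with
    | nil => rfl
    | cons hd tl =>
      have hr : R x hd := List.isChain_cons_cons.1 h |>.1
      simp only [R] at hr
      simp [hr]

lemma chain_of_reduce : ∀ {L : List X}, FreeGroup.reduce L = L → List.Chain' R L := by
  intro L
  induction L with
  | nil => intro _; exact List.isChain_nil
  | cons x L ih =>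
    intro h
    rw [FreeGroup.reduce.cons] at h
    have hlen : (FreeGroup.reduce L).length ≤ L.length :=
      FreeGroup.Red.length_le FreeGroup.reduce.red
    cases r : FreeGroup.reduce L with
    | nil =>
      rw [r] at h
      simp only at h
      injection h with _ h2
      rw [← h2]
      exact List.isChain_singleton x
    | cons hd tl =>
      rw [r] at h hlen
      simp only at h
      by_cases c : x.1 = hd.1 ∧ x.2 = !hd.2
      · rw [if_pos c] at h
        have e1 : tl.length = L.length + 1 := by rw [h]; rfl
        have e2 : tl.length + 1 ≤ L.length := by simpa using hlen
        omega
      · rw [if_neg c] at h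
        have hL : L = hd :: tl := by
          injection h with _ h2
          exact h2.symm
        subst hL
        exact List.isChain_cons_cons.2 ⟨c, ih r⟩

lemma norm_mk_chain {M : List X} (h : List.Chain' R M) :
    FreeGroup.norm (FreeGroup.mk M) = M.length := by
  show (FreeGroup.mk M).toWord.length = M.length
  rw [FreeGroup.toWord_mk, reduce_of_chain h]

/-- decidable combinatorial property -/
def Q (L : List X) : Prop :=
  (∃ i : Fin 7, ∃ la : Fin 3, 1 ≤ la.1 ∧ i.1 + 2 * la.1 ≤ 6 ∧
     (L.drop i.1).take la.1 = (L.drop (i.1 + la.1)).take la.1) ∨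
  (∃ i : Fin 7, ∃ la lb : Fin 3, 1 ≤ la.1 ∧ 1 ≤ lb.1 ∧ i.1 + 2 * la.1 + lb.1 ≤ 6 ∧
     (L.drop i.1).take la.1 = (L.drop (i.1 + la.1 + lb.1)).take la.1)

instance (L : List X) : Decidable (Q L) := inferInstanceAs (Decidable (_ ∨ _))

def Rd : List X → Bool
  | a :: b :: t => decide (R a b) && Rd (b :: t)
  | _ => true

lemma rd_iff : ∀ L : List X, Rd L = true ↔ List.Chain' R L
  | [] => by simp [Rd, List.Chain', List.isChain_nil]
  | [a] => by simp [Rd, List.Chain', List.isChain_singleton]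
  | a :: b :: t => by
    rw [List.Chain', List.isChain_cons_cons, ← List.Chain', ← rd_iff (b :: t)]
    simp [Rd]

set_option maxRecDepth 10000 in
lemma key : ∀ a b c d e f : X, Rd [a, b, c, d, e, f] = true → Q [a, b, c, d, e, f] := by
  decide

lemma key' (L : List X) (h6 : L.length = 6) (hc : List.Chain' R L) : Q L := by
  match L, h6 with
  | [a, b, c, d, e, f], _ =>
    exact key a b c d e f ((rd_iff _).2 hc)

lemma dsplit (L : List X) (i m : ℕ) :
    L.drop i = (L.drop i).take m ++ L.drop (i + m) := by
  conv_lhs => rw [← List.take_append_drop m (L.drop i)]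
  rw [List.drop_drop, Nat.add_comm]

end Stmt19Aux

open Stmt19Aux in
/-- Every reduced word of length `6` in the free group on two generators contains a
subword of the form `α²` or `αβα`, where `α`, `β` are nontrivial elements of length at
most `2` and "subword" means a decomposition as a product whose word lengths add up. -/
theorem stmt_19 (w : FreeGroup (Fin 2)) (hw : w.norm = 6) :
    (∃ u α v : FreeGroup (Fin 2), 1 ≤ α.norm ∧ α.norm ≤ 2 ∧
      w = u * (α * α) * v ∧ w.norm = u.norm + (α.norm + α.norm) + v.norm) ∨
    (∃ u α β v : FreeGroup (Fin 2), 1 ≤ α.norm ∧ α.norm ≤ 2 ∧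
      1 ≤ β.norm ∧ β.norm ≤ 2 ∧
      w = u * (α * β * α) * v ∧
      w.norm = u.norm + (α.norm + β.norm + α.norm) + v.norm) := by
  set L := w.toWord with hLdef
  have h6 : L.length = 6 := hw
  have hred : FreeGroup.reduce L = L := FreeGroup.reduce_toWord w
  have hc : List.Chain' R L := chain_of_reduce hred
  have hwL : w = FreeGroup.mk L := (FreeGroup.mk_toWord).symm
  rcases key' L h6 hc with ⟨i, la, h1, h2, heq⟩ | ⟨i, la, lb, h1, h1b, h2, heq⟩
  · -- square case
    set u := L.take i.1 with hu
    set a := (L.drop i.1).take la.1 with ha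
    set v := L.drop (i.1 + la.1 + la.1) with hv
    have hdecomp : L = u ++ (a ++ (a ++ v)) := by
      conv_lhs => rw [← List.take_append_drop i.1 L, dsplit L i.1 la.1,
        dsplit L (i.1 + la.1) la.1]
      rw [← heq]
    have hui : u <:+: L := (List.take_prefix _ _).isInfix
    have hai : a <:+: L := ((List.take_prefix _ _).isInfix).trans
      (List.drop_suffix _ _).isInfix
    have hvi : v <:+: L := (List.drop_suffix _ _).isInfix
    have hnu : (FreeGroup.mk u).norm = u.length := norm_mk_chain (hc.infix hui)
    have hna : (FreeGroup.mk a).norm = a.length := norm_mk_chain (hc.infix hai)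
    have hnv : (FreeGroup.mk v).norm = v.length := norm_mk_chain (hc.infix hvi)
    have hlu : u.length = i.1 := by rw [hu, List.length_take]; omega
    have hla : a.length = la.1 := by
      rw [ha, List.length_take, List.length_drop]; omega
    have hlv : v.length = 6 - (i.1 + la.1 + la.1) := by
      rw [hv, List.length_drop, h6]
    refine Or.inl ⟨FreeGroup.mk u, FreeGroup.mk a, FreeGroup.mk v, ?_, ?_, ?_, ?_⟩
    · omega
    · omega
    · rw [hwL, hdecomp, FreeGroup.mul_mk, FreeGroup.mul_mk, FreeGroup.mul_mk]
      simp [List.append_assoc]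
    · rw [hnu, hna, hnv, hlu, hla, hlv, hw]; omega
  · -- aba case
    set u := L.take i.1 with hu
    set a := (L.drop i.1).take la.1 with ha
    set b := (L.drop (i.1 + la.1)).take lb.1 with hb
    set v := L.drop (i.1 + la.1 + lb.1 + la.1) with hv
    have hdecomp : L = u ++ (a ++ (b ++ (a ++ v))) := by
      conv_lhs => rw [← List.take_append_drop i.1 L, dsplit L i.1 la.1,
        dsplit L (i.1 + la.1) lb.1, dsplit L (i.1 + la.1 + lb.1) la.1]
      rw [← heq]
    have hui : u <:+: L := (List.take_prefix _ _).isInfix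
    have hai : a <:+: L := ((List.take_prefix _ _).isInfix).trans
      (List.drop_suffix _ _).isInfix
    have hbi : b <:+: L := ((List.take_prefix _ _).isInfix).trans
      (List.drop_suffix _ _).isInfix
    have hvi : v <:+: L := (List.drop_suffix _ _).isInfix
    have hnu : (FreeGroup.mk u).norm = u.length := norm_mk_chain (hc.infix hui)
    have hna : (FreeGroup.mk a).norm = a.length := norm_mk_chain (hc.infix hai)
    have hnb : (FreeGroup.mk b).norm = b.length := norm_mk_chain (hc.infix hbi)
    have hnv : (FreeGroup.mk v).norm = v.length := norm_mk_chain (hc.infix hvi)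
    have hlu : u.length = i.1 := by rw [hu, List.length_take]; omega
    have hla : a.length = la.1 := by
      rw [ha, List.length_take, List.length_drop]; omega
    have hlb : b.length = lb.1 := by
      rw [hb, List.length_take, List.length_drop]; omega
    have hlv : v.length = 6 - (i.1 + la.1 + lb.1 + la.1) := by
      rw [hv, List.length_drop, h6]
    refine Or.inr ⟨FreeGroup.mk u, FreeGroup.mk a, FreeGroup.mk b, FreeGroup.mk v,
      ?_, ?_, ?_, ?_, ?_, ?_⟩
    · omega
    · omega
    · omega
    · omega
    · rw [hwL, hdecomp, FreeGroup.mul_mk, FreeGroup.mul_mk, FreeGroup.mul_mk,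
        FreeGroup.mul_mk]
      simp [List.append_assoc]
    · rw [hnu, hna, hnb, hnv, hlu, hla, hlb, hlv, hw]; omega
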